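/- Suppose √(-1) ∈ k. Then there is an algebra isomorphism C(V⊕V, q⊕q) ≅ End_k(C(V,q)) given by letting e_x ⊗ e_y ∈ C(V,q) ⊗̂ C(V,q) ≅ C(V⊕V, q⊕q) act on e_z ∈ C(V,q) by (e_x ⊗ e_y)·e_z = i^{ρ(y)} (-1)^{y·z} e_x e_y e_z (product in C(V,q)); in particular this action is faithful and irreducible, realizing C(V,q) as the spinor representation of C(V⊕V, q⊕q). -/

import Mathlib

open CliffordAlgebra

/-- The diagonal quadratic form with weights `q_1, …, q_n`. -/
noncomputable def QF {k : Type*} [Field k] {n : ℕ} (q : Fin n → k) :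
    QuadraticForm k (Fin n → k) :=
  QuadraticMap.weightedSumSquares k q

/-- The quadratic form `q ⊕ q` on `V ⊕ V`, modelled on `(Fin n ⊕ Fin n) → k`. -/
noncomputable def QF2 {k : Type*} [Field k] {n : ℕ} (q : Fin n → k) :
    QuadraticForm k ((Fin n ⊕ Fin n) → k) :=
  QuadraticMap.weightedSumSquares k (Sum.elim q q)

/-- The canonical basis element `e_x = e_1^{x_1} ⋯ e_n^{x_n}` of `C(V,q)`. -/
noncomputable def eB {k : Type*} [Field k] {n : ℕ} (q : Fin n → k) (x : Fin n → ZMod 2) :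
    CliffordAlgebra (QF q) :=
  ((List.finRange n).map fun i => ι (QF q) (Pi.single i 1) ^ (x i).val).prod

/-- The canonical basis element `e_x ⊗ e_y` of `C(V ⊕ V, q ⊕ q)`. -/
noncomputable def eB2 {k : Type*} [Field k] {n : ℕ} (q : Fin n → k)
    (x y : Fin n → ZMod 2) : CliffordAlgebra (QF2 q) :=
  ((List.finRange n).map fun i => ι (QF2 q) (Pi.single (Sum.inl i) 1) ^ (x i).val).prod *
    ((List.finRange n).map fun i => ι (QF2 q) (Pi.single (Sum.inr i) 1) ^ (y i).val).prod

/-- `ρ(x) = Σ_i x_i`. -/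
def rho {n : ℕ} (x : Fin n → ZMod 2) : ℕ := ∑ i, (x i).val

/-- `x·y = Σ_i x_i y_i`. -/
def dotp {n : ℕ} (x y : Fin n → ZMod 2) : ℕ := ∑ i, (x i).val * (y i).val

section Words
variable {k : Type*} [Field k] {J : Type*} [DecidableEq J]
variable {Q : QuadraticForm k (J → k)}

noncomputable def Gg (Q : QuadraticForm k (J → k)) (j : J) : CliffordAlgebra Q :=
  CliffordAlgebra.ι Q (Pi.single j 1)

noncomputable def Wd (Q : QuadraticForm k (J → k)) (x : J → ZMod 2) (L : List J) :
    CliffordAlgebra Q :=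
  (L.map fun j => Gg Q j ^ (x j).val).prod

lemma zmod2_val_cases (c : ZMod 2) : c.val = 0 ∨ c.val = 1 := by
  have := ZMod.val_lt c; omega

lemma zmod2_val_zero_iff (c : ZMod 2) : c.val = 0 ↔ c = 0 := by revert c; decide
lemma zmod2_val_one_iff (c : ZMod 2) : c.val = 1 ↔ c = 1 := by revert c; decide

@[simp] lemma Wd_nil (x : J → ZMod 2) : Wd Q x [] = 1 := rfl

lemma Wd_cons (x : J → ZMod 2) (a : J) (L : List J) :
    Wd Q x (a :: L) = Gg Q a ^ (x a).val * Wd Q x L := by simp [Wd]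

lemma Wd_append (x : J → ZMod 2) (L₁ L₂ : List J) :
    Wd Q x (L₁ ++ L₂) = Wd Q x L₁ * Wd Q x L₂ := by simp [Wd]

lemma Wd_congr {x x' : J → ZMod 2} {L : List J} (h : ∀ j ∈ L, x j = x' j) :
    Wd Q x L = Wd Q x' L := by
  induction L with
  | nil => rfl
  | cons a L ih =>
    rw [Wd_cons, Wd_cons, h a (by simp), ih fun j hj => h j (by simp [hj])]

lemma Wd_zero (L : List J) : Wd Q 0 L = 1 := by
  induction L with
  | nil => rfl
  | cons a L ih => rw [Wd_cons, ih]; simp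

lemma list_sum_ite_eq {M : Type*} [AddCommMonoid M] (f : J → M) (j : J) :
    ∀ L : List J, L.Nodup → j ∈ L → (L.map fun b => if b = j then f b else 0).sum = f j := by
  intro L
  induction L with
  | nil => intro _ h; simp at h
  | cons a L ih =>
    intro hN hj
    have haL : a ∉ L := (List.nodup_cons.mp hN).1
    rcases List.mem_cons.mp hj with rfl | hjL
    · rw [List.map_cons, List.sum_cons, if_pos rfl, List.sum_eq_zero, add_zero]
      intro m hm
      obtain ⟨b, hb, rfl⟩ := List.mem_map.mp hm
      rw [if_neg (by rintro rfl; exact haL hb)]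
    · rw [List.map_cons, List.sum_cons, if_neg (by rintro rfl; exact haL hjL), zero_add,
        ih (List.nodup_cons.mp hN).2 hjL]

lemma list_sum_split (f : J → ℕ) (j : J) (L : List J) (hN : L.Nodup) (hj : j ∈ L) :
    ((L.map fun b => if b = j then 0 else f b).sum + f j) = (L.map f).sum := by
  have h1 : (L.map f).sum
      = (L.map fun b => (if b = j then 0 else f b) + (if b = j then f b else 0)).sum := by
    congr 1
    apply List.map_congr_left
    intro b _
    by_cases hb : b = j <;> simp [hb]
  rw [h1, ← list_sum_ite_eq f j L hN hj]
  induction L with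
  | nil => simp
  | cons a L ih => simp [List.map_cons, List.sum_cons] at *; omega

section rels
variable {w : J → k}
variable (hsq : ∀ j, Gg Q j * Gg Q j = algebraMap k _ (w j))
variable (hanti : ∀ j l, j ≠ l → Gg Q j * Gg Q l = -(Gg Q l * Gg Q j))

include hanti in
lemma g_pow_mul_g (a j : J) (v : ℕ) (hv : v = 0 ∨ v = 1) :
    Gg Q a ^ v * Gg Q j = ((-1 : k) ^ (if a = j then 0 else v)) • (Gg Q j * Gg Q a ^ v) := by
  rcases eq_or_ne a j with rfl | hne
  · simp [pow_mul_comm']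
  · rcases hv with rfl | rfl
    · simp
    · simp only [if_neg hne, pow_one, hanti a j hne]
      rw [neg_smul, one_smul]

include hanti in
lemma g_mul_g_pow (a j : J) (v : ℕ) (hv : v = 0 ∨ v = 1) :
    Gg Q j * Gg Q a ^ v = ((-1 : k) ^ (if a = j then 0 else v)) • (Gg Q a ^ v * Gg Q j) := by
  rcases eq_or_ne a j with rfl | hne
  · simp [pow_mul_comm']
  · rcases hv with rfl | rfl
    · simp
    · simp only [if_neg hne, pow_one, hanti j a (Ne.symm hne)]
      rw [neg_smul, one_smul]

include hanti in
lemma Wd_mul_g (x : J → ZMod 2) (L : List J) (j : J) :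
    Wd Q x L * Gg Q j
      = ((-1 : k) ^ ((L.map fun b => if b = j then 0 else (x b).val).sum))
          • (Gg Q j * Wd Q x L) := by
  induction L with
  | nil => simp
  | cons a L ih =>
    rw [Wd_cons, mul_assoc, ih, mul_smul_comm, ← mul_assoc,
      g_pow_mul_g hanti a j _ (zmod2_val_cases _), smul_mul_assoc, smul_smul,
      ← pow_add, List.map_cons, List.sum_cons, mul_assoc, ← Wd_cons, Nat.add_comm]

include hanti in
lemma g_mul_Wd_sign (x : J → ZMod 2) (L : List J) (j : J) :
    Gg Q j * Wd Q x L
      = ((-1 : k) ^ ((L.map fun b => if b = j then 0 else (x b).val).sum))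
          • (Wd Q x L * Gg Q j) := by
  rw [Wd_mul_g hanti x L j, smul_smul, ← pow_add, ← two_mul, pow_mul, neg_one_sq, one_pow,
    one_smul]

include hsq hanti in
lemma g_mul_Wd (hw : ∀ j, w j ≠ 0) (x : J → ZMod 2) (L : List J) :
    L.Nodup → ∀ j ∈ L, ∃ c : k, c ≠ 0 ∧
      Gg Q j * Wd Q x L = c • Wd Q (x + Pi.single j 1) L := by
  induction L with
  | nil => intro _ j hj; simp at hj
  | cons a L ih =>
    intro hN j hj
    have haL : a ∉ L := (List.nodup_cons.mp hN).1
    have hLN : L.Nodup := (List.nodup_cons.mp hN).2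
    rcases List.mem_cons.mp hj with rfl | hjL
    · have hWd : Wd Q (x + Pi.single j 1) L = Wd Q x L :=
        Wd_congr fun b hb => by
          rw [Pi.add_apply, Pi.single_eq_of_ne (by rintro rfl; exact haL hb), add_zero]
      rcases zmod2_val_cases (x j) with h0 | h1
      · refine ⟨1, one_ne_zero, ?_⟩
        have hx0 : x j = 0 := (zmod2_val_zero_iff _).mp h0
        have hv : (((x + Pi.single j 1 : J → ZMod 2)) j).val = 1 := by simp [hx0]; decide
        rw [Wd_cons, h0, pow_zero, one_mul, one_smul, Wd_cons, hv, pow_one, hWd]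
      · refine ⟨w j, hw j, ?_⟩
        have hx1 : x j = 1 := (zmod2_val_one_iff _).mp h1
        have hv : (((x + Pi.single j 1 : J → ZMod 2)) j).val = 0 := by
          simp [hx1]; decide
        rw [Wd_cons, h1, pow_one, ← mul_assoc, hsq j, Wd_cons, hv, pow_zero, one_mul, hWd,
          ← Algebra.smul_def]
    · have hne : a ≠ j := fun h => haL (h ▸ hjL)
      obtain ⟨c, hc0, hc⟩ := ih hLN j hjL
      refine ⟨(-1 : k) ^ (if a = j then 0 else (x a).val) * c,
        mul_ne_zero (pow_ne_zero _ (neg_ne_zero.mpr one_ne_zero)) hc0, ?_⟩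
      have hxa : ((x + Pi.single j 1 : J → ZMod 2)) a = x a := by
        simp [Pi.single_eq_of_ne hne]
      rw [Wd_cons, ← mul_assoc, g_mul_g_pow hanti a j _ (zmod2_val_cases _), smul_mul_assoc,
        mul_assoc, hc, mul_smul_comm, smul_smul, Wd_cons, hxa]

end rels

lemma involute_Wd (x : J → ZMod 2) (L : List J) :
    involute (Wd Q x L) = ((-1 : k) ^ ((L.map fun b => (x b).val).sum)) • Wd Q x L := by
  induction L with
  | nil => simp
  | cons a L ih =>
    rw [Wd_cons, map_mul, ih, map_pow, List.map_cons, List.sum_cons, mul_smul_comm]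
    have : (involute (Gg Q a)) ^ (x a).val
        = ((-1 : k) ^ (x a).val) • Gg Q a ^ (x a).val := by
      rcases zmod2_val_cases (x a) with h | h <;> rw [h]
      · simp
      · rw [pow_one, pow_one, pow_one, Gg, involute_ι, neg_smul, one_smul]
    rw [this, smul_mul_assoc, smul_smul, ← pow_add, Nat.add_comm]



lemma neg_one_pow_vals (c d : ZMod 2) :
    ((-1 : k) ^ c.val) * ((-1 : k) ^ d.val) = if c = d then 1 else -1 := by
  by_cases hcd : c = d
  · subst hcd
    rw [if_pos rfl]
    rcases zmod2_val_cases c with h | h <;> rw [h] <;> norm_num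
  · rw [if_neg hcd]
    have key : ∀ c d : ZMod 2, c ≠ d → (c.val = 0 ∧ d.val = 1) ∨ (c.val = 1 ∧ d.val = 0) := by
      decide
    rcases key c d hcd with ⟨h1, h2⟩ | ⟨h1, h2⟩ <;> rw [h1, h2] <;> norm_num

/-- mask of `y` along a list -/
def maskf (L : List J) (y : J → ZMod 2) : J → ZMod 2 := fun j => if j ∈ L then y j else 0

section listing
variable {w : J → k}
variable (hsq : ∀ j, Gg Q j * Gg Q j = algebraMap k _ (w j))
variable (hanti : ∀ j l, j ≠ l → Gg Q j * Gg Q l = -(Gg Q l * Gg Q j))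
variable (hw : ∀ j, w j ≠ 0)
variable {ℓ : List J} (hnd : ℓ.Nodup) (hmem : ∀ j, j ∈ ℓ)

include hsq hanti hw hnd hmem in
lemma Wd_mul_Wd_mask (y : J → ZMod 2) (L : List J) (hLN : L.Nodup) :
    ∀ z : J → ZMod 2, ∃ c : k, c ≠ 0 ∧
      Wd Q z ℓ * Wd Q y L = c • Wd Q (z + maskf L y) ℓ := by
  induction L with
  | nil =>
    intro z
    refine ⟨1, one_ne_zero, ?_⟩
    have : z + maskf ([] : List J) y = z := by
      funext j; simp [maskf]
    rw [this, Wd_nil, mul_one, one_smul]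
  | cons a L ih =>
    intro z
    have haL : a ∉ L := (List.nodup_cons.mp hLN).1
    have hLN' : L.Nodup := (List.nodup_cons.mp hLN).2
    rcases zmod2_val_cases (y a) with h0 | h1
    · obtain ⟨c, hc0, hc⟩ := ih hLN' z
      refine ⟨c, hc0, ?_⟩
      have hmask : z + maskf L y = z + maskf (a :: L) y := by
        funext j
        rcases eq_or_ne j a with rfl | hja
        · have hya : y j = 0 := (zmod2_val_zero_iff _).mp h0
          simp [maskf, haL, hya]
        · simp [maskf, hja, List.mem_cons]
      rw [Wd_cons, h0, pow_zero, one_mul, hc, hmask]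
    · have hya : y a = 1 := (zmod2_val_one_iff _).mp h1
      rw [Wd_cons, h1, pow_one, ← mul_assoc]
      rw [Wd_mul_g hanti z ℓ a]
      obtain ⟨c1, hc10, hc1⟩ := g_mul_Wd hsq hanti hw z ℓ hnd a (hmem a)
      rw [hc1]
      obtain ⟨c2, hc20, hc2⟩ := ih hLN' (z + Pi.single a 1)
      refine ⟨(-1 : k) ^ ((List.map (fun b => if b = a then 0 else (z b).val) ℓ).sum) * c1 * c2,
        mul_ne_zero (mul_ne_zero (pow_ne_zero _ (neg_ne_zero.mpr one_ne_zero)) hc10) hc20, ?_⟩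
      rw [smul_smul, smul_mul_assoc, hc2, smul_smul, mul_assoc]
      have harg : z + Pi.single a 1 + maskf L y = z + maskf (a :: L) y := by
        funext j
        rcases eq_or_ne j a with rfl | hja
        · simp [maskf, haL, hya, Pi.single_eq_same, add_assoc]
        · simp [maskf, hja, List.mem_cons, Pi.single_eq_of_ne hja]
      rw [harg]

include hsq hanti hw hnd hmem in
lemma Wd_mul_Wd (z y : J → ZMod 2) : ∃ c : k, c ≠ 0 ∧
    Wd Q z ℓ * Wd Q y ℓ = c • Wd Q (z + y) ℓ := by
  obtain ⟨c, hc0, hc⟩ := Wd_mul_Wd_mask hsq hanti hw hnd hmem y ℓ hnd z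
  refine ⟨c, hc0, ?_⟩
  rw [hc]
  congr 2
  funext j
  simp [maskf, hmem j]

include hsq hanti hw hnd hmem in
lemma Wd_ne_zero (hone : (1 : CliffordAlgebra Q) ≠ 0) (z : J → ZMod 2) :
    Wd Q z ℓ ≠ 0 := by
  obtain ⟨c, hc0, hc⟩ := Wd_mul_Wd hsq hanti hw hnd hmem z z
  intro h
  rw [h, zero_mul] at hc
  have hz : z + z = 0 := by
    funext j
    have : ∀ c : ZMod 2, c + c = 0 := by decide
    exact this (z j)
  rw [hz, Wd_zero, eq_comm, smul_eq_zero] at hc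
  rcases hc with hc | hc
  · exact hc0 hc
  · exact hone hc

lemma Wd_single (j : J) : ∀ L : List J, L.Nodup → j ∈ L →
    Wd Q (Pi.single j 1) L = Gg Q j := by
  intro L
  induction L with
  | nil => intro _ h; simp at h
  | cons a L ih =>
    intro hN hj
    have haL : a ∉ L := (List.nodup_cons.mp hN).1
    rcases List.mem_cons.mp hj with rfl | hjL
    · have h1 : Wd Q (Pi.single j 1) L = Wd Q (0 : J → ZMod 2) L :=
        Wd_congr fun b hb => Pi.single_eq_of_ne (by rintro rfl; exact haL hb) 1
      have hv : ((Pi.single j 1 : J → ZMod 2) j).val = 1 := by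
        rw [Pi.single_eq_same]; rfl
      rw [Wd_cons, h1, Wd_zero, mul_one, hv, pow_one]
    · have hv : ((Pi.single j 1 : J → ZMod 2) a).val = 0 := by
        rw [Pi.single_eq_of_ne (by rintro rfl; exact haL hjL)]
        rfl
      rw [Wd_cons, ih (List.nodup_cons.mp hN).2 hjL, hv, pow_zero, one_mul]

include hsq hanti hw hnd hmem in
lemma Wd_span [Fintype J] :
    ⊤ ≤ Submodule.span k (Set.range fun z : J → ZMod 2 => Wd Q z ℓ) := by
  set Sp := Submodule.span k (Set.range fun z : J → ZMod 2 => Wd Q z ℓ) with hSp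
  have hmulWd : ∀ zz : J → ZMod 2, ∀ v ∈ Sp, Wd Q zz ℓ * v ∈ Sp := by
    intro zz v hv
    refine Submodule.span_induction (p := fun v _ => Wd Q zz ℓ * v ∈ Sp) ?_ ?_ ?_ ?_ hv
    · rintro x ⟨yy, rfl⟩
      obtain ⟨c, -, hc⟩ := Wd_mul_Wd hsq hanti hw hnd hmem zz yy
      show Wd Q zz ℓ * Wd Q yy ℓ ∈ Sp
      rw [hc]
      exact Sp.smul_mem c (Submodule.subset_span ⟨_, rfl⟩)
    · show Wd Q zz ℓ * 0 ∈ Sp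
      rw [mul_zero]; exact Sp.zero_mem
    · intro a b _ _ ha hb
      show Wd Q zz ℓ * (a + b) ∈ Sp
      rw [mul_add]; exact Sp.add_mem ha hb
    · intro r a _ ha
      show Wd Q zz ℓ * (r • a) ∈ Sp
      rw [mul_smul_comm]; exact Sp.smul_mem r ha
  intro c _
  refine CliffordAlgebra.induction ?_ ?_ ?_ ?_ c
  · intro r
    have h1 : (algebraMap k (CliffordAlgebra Q)) r = r • Wd Q (0 : J → ZMod 2) ℓ := by
      rw [Wd_zero, Algebra.algebraMap_eq_smul_one]
    rw [h1]
    exact Sp.smul_mem r (Submodule.subset_span ⟨0, rfl⟩)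
  · intro v
    have hsingle : ∀ i : J, (fun j => if i = j then (1 : k) else 0) = Pi.single i 1 := by
      intro i; funext j; rw [Pi.single_apply]
      by_cases h : j = i
      · simp [h]
      · rw [if_neg h, if_neg (fun h' => h h'.symm)]
    have hv : (CliffordAlgebra.ι Q) v = ∑ j, v j • Wd Q (Pi.single j 1) ℓ := by
      conv_lhs => rw [pi_eq_sum_univ v]
      rw [map_sum]
      refine Finset.sum_congr rfl fun j _ => ?_
      rw [map_smul, hsingle j, Wd_single j ℓ hnd (hmem j)]
      rfl
    rw [hv]
    exact Submodule.sum_mem _ fun j _ => Sp.smul_mem _ (Submodule.subset_span ⟨_, rfl⟩)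
  · intro a b ha hb
    refine Submodule.span_induction (p := fun a _ => a * b ∈ Sp) ?_ ?_ ?_ ?_ ha
    · rintro x ⟨zz, rfl⟩; exact hmulWd zz b hb
    · show (0 : CliffordAlgebra Q) * b ∈ Sp
      rw [zero_mul]; exact Sp.zero_mem
    · intro u v _ _ hu hv
      show (u + v) * b ∈ Sp
      rw [add_mul]; exact Sp.add_mem hu hv
    · intro r u _ hu
      show (r • u) * b ∈ Sp
      rw [smul_mul_assoc]; exact Sp.smul_mem r hu
  · intro a b ha hb; exact Sp.add_mem ha hb

include hsq hanti hw hnd hmem in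
lemma Wd_linearIndependent [Fintype J]
    (hone : (1 : CliffordAlgebra Q) ≠ 0) (hk2 : (2 : k) ≠ 0)
    (A : J → (CliffordAlgebra Q →ₐ[k] CliffordAlgebra Q))
    (hA : ∀ j l, A j (Gg Q l) = (if l = j then (-1 : k) else 1) • Gg Q l) :
    LinearIndependent k (fun z : J → ZMod 2 => Wd Q z ℓ) := by
  have hAW : ∀ (j : J) (z : J → ZMod 2), A j (Wd Q z ℓ) = ((-1 : k) ^ (z j).val) • Wd Q z ℓ := by
    intro j z
    have key : ∀ L : List J,
        A j (Wd Q z L)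
          = ((-1 : k) ^ ((L.map fun b => if b = j then (z b).val else 0).sum)) • Wd Q z L := by
      intro L
      induction L with
      | nil => simp
      | cons a L ih =>
        rw [Wd_cons, map_mul, map_pow, ih, hA j a, List.map_cons, List.sum_cons]
        rcases eq_or_ne a j with rfl | hne
        · rw [if_pos rfl, if_pos rfl]
          rcases zmod2_val_cases (z a) with h | h <;> rw [h] <;>
            simp [smul_smul, smul_mul_assoc, mul_smul_comm, pow_add, Wd_cons]
        · rw [if_neg hne, if_neg hne, one_smul, zero_add, mul_smul_comm]
    rw [key ℓ, list_sum_ite_eq (fun b => (z b).val) j ℓ hnd (hmem j)]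
  set opf : J → (J → ZMod 2) → Module.End k (CliffordAlgebra Q) := fun j t =>
    (2⁻¹ : k) • ((1 : Module.End k (CliffordAlgebra Q))
      + ((-1 : k) ^ ((t j).val)) • (A j).toLinearMap) with hopf
  have heig : ∀ (t z : J → ZMod 2) (L : List J),
      ((L.map fun j => opf j t).prod) (Wd Q z ℓ)
        = ((L.map fun j => if z j = t j then (1 : k) else 0).prod) • Wd Q z ℓ := by
    intro t z L
    induction L with
    | nil => simp only [List.map_nil, List.prod_nil, Module.End.one_apply, one_smul]
    | cons a L ih =>
      rw [List.map_cons, List.prod_cons, List.map_cons, List.prod_cons, Module.End.mul_apply, ih,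
        map_smul]
      simp only [hopf, LinearMap.smul_apply, LinearMap.add_apply, Module.End.one_apply,
        AlgHom.toLinearMap_apply, hAW a z, smul_smul]
      rw [neg_one_pow_vals (t a) (z a)]
      rcases eq_or_ne (z a) (t a) with h | h
      · rw [if_pos h.symm, if_pos h, one_smul, ← two_smul k, smul_smul, mul_assoc,
          inv_mul_cancel₀ hk2, mul_one, one_mul]
      · rw [if_neg (Ne.symm h), if_neg h, neg_one_smul, add_neg_cancel, smul_zero, zero_mul,
          zero_smul]
  rw [Fintype.linearIndependent_iff]
  intro g hg t
  have happ := congrArg (fun u => ((ℓ.map fun j => opf j t).prod) u) hg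
  simp only [map_sum, map_smul, map_zero] at happ
  have hterm : ∀ z : J → ZMod 2,
      ((ℓ.map fun j => opf j t).prod) (Wd Q z ℓ)
        = (if z = t then (1 : k) else 0) • Wd Q z ℓ := by
    intro z
    rw [heig t z ℓ]
    rcases eq_or_ne z t with rfl | hne
    · rw [if_pos rfl]
      congr 1
      refine List.prod_eq_one fun m hm => ?_
      obtain ⟨b, _, rfl⟩ := List.mem_map.mp hm
      rw [if_pos rfl]
    · rw [if_neg hne]
      obtain ⟨j, hj⟩ : ∃ j, z j ≠ t j := by
        by_contra h
        push_neg at h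
        exact hne (funext h)
      congr 1
      refine List.prod_eq_zero ?_
      refine List.mem_map.mpr ⟨j, hmem j, ?_⟩
      rw [if_neg hj]
  simp only [hterm] at happ
  have hsum : ∑ z : J → ZMod 2, g z • (if z = t then (1 : k) else 0) • Wd Q z ℓ
      = g t • Wd Q t ℓ := by
    rw [Finset.sum_eq_single t]
    · rw [if_pos rfl, one_smul]
    · intro b _ hb; rw [if_neg hb, zero_smul, smul_zero]
    · intro h; exact absurd (Finset.mem_univ t) h
  rw [hsum] at happ
  rcases smul_eq_zero.mp happ with h | h
  · exact h
  · exact absurd h (Wd_ne_zero hsq hanti hw hnd hmem hone t)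

end listing

section WSS
variable {k : Type*} [Field k] {J : Type*} [Fintype J] [DecidableEq J] (w : J → k)

lemma wss_single (j : J) : QuadraticMap.weightedSumSquares k w (Pi.single j 1) = w j := by
  rw [QuadraticMap.weightedSumSquares_apply, Finset.sum_eq_single j]
  · simp
  · intro b _ hb; rw [Pi.single_eq_of_ne hb]; simp
  · simp

lemma wss_sq (j : J) :
    Gg (QuadraticMap.weightedSumSquares k w) j * Gg (QuadraticMap.weightedSumSquares k w) j
      = algebraMap k _ (w j) := by
  rw [Gg, CliffordAlgebra.ι_sq_scalar, wss_single]

lemma wss_polar (j l : J) (h : j ≠ l) :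
    QuadraticMap.polar (⇑(QuadraticMap.weightedSumSquares k w))
      (Pi.single j 1) (Pi.single l 1) = 0 := by
  rw [QuadraticMap.polar, wss_single, wss_single, QuadraticMap.weightedSumSquares_apply]
  have key : ∀ b : J,
      w b • (((Pi.single j 1 + Pi.single l 1 : J → k)) b
          * ((Pi.single j 1 + Pi.single l 1 : J → k)) b)
        = (if b = j then w b else 0) + (if b = l then w b else 0) := by
    intro b
    rcases eq_or_ne b j with rfl | hbj
    · rw [if_pos rfl, if_neg h]
      simp [Pi.single_eq_same, Pi.single_eq_of_ne h]
    · rcases eq_or_ne b l with rfl | hbl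
      · rw [if_neg hbj, if_pos rfl]
        simp [Pi.single_eq_same, Pi.single_eq_of_ne hbj]
      · rw [if_neg hbj, if_neg hbl]
        simp [Pi.single_eq_of_ne hbj, Pi.single_eq_of_ne hbl]
  rw [Finset.sum_congr rfl (fun b _ => key b), Finset.sum_add_distrib]
  simp [Finset.sum_ite_eq']

lemma wss_anti (j l : J) (h : j ≠ l) :
    Gg (QuadraticMap.weightedSumSquares k w) j * Gg (QuadraticMap.weightedSumSquares k w) l
      = -(Gg (QuadraticMap.weightedSumSquares k w) l
          * Gg (QuadraticMap.weightedSumSquares k w) j) := by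
  have h2 := CliffordAlgebra.ι_mul_ι_add_swap
    (Q := QuadraticMap.weightedSumSquares k w) (Pi.single j 1) (Pi.single l 1)
  rw [wss_polar w j l h, map_zero] at h2
  exact eq_neg_of_add_eq_zero_left h2

/-- the sign-flip linear map -/
def flipLM (j : J) : (J → k) →ₗ[k] (J → k) where
  toFun v := fun l => (if l = j then (-1 : k) else 1) * v l
  map_add' u v := by funext l; simp [mul_add]
  map_smul' r v := by funext l; simp [smul_eq_mul]

lemma flip_isometry (j : J) (v : J → k) :
    QuadraticMap.weightedSumSquares k w ((flipLM j).toFun v)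
      = QuadraticMap.weightedSumSquares k w v := by
  rw [QuadraticMap.weightedSumSquares_apply, QuadraticMap.weightedSumSquares_apply]
  refine Finset.sum_congr rfl fun l _ => ?_
  show w l • ((if l = j then (-1 : k) else 1) * v l * ((if l = j then (-1 : k) else 1) * v l))
      = w l • (v l * v l)
  rcases eq_or_ne l j with rfl | hl
  · simp
  · simp [hl]

/-- the sign-flip algebra automorphism -/
noncomputable def flipA (j : J) :
    CliffordAlgebra (QuadraticMap.weightedSumSquares k w)
      →ₐ[k] CliffordAlgebra (QuadraticMap.weightedSumSquares k w) :=
  CliffordAlgebra.map (QuadraticMap.Isometry.mk (flipLM j) (flip_isometry w j))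

lemma flipA_Gg (j l : J) :
    flipA w j (Gg (QuadraticMap.weightedSumSquares k w) l)
      = (if l = j then (-1 : k) else 1) • Gg (QuadraticMap.weightedSumSquares k w) l := by
  rw [flipA, Gg, CliffordAlgebra.map_apply_ι]
  have harg : (flipLM j : (J → k) →ₗ[k] (J → k)) ((Pi.single l 1 : J → k))
      = ((if l = j then (-1 : k) else 1) • (Pi.single l (1 : k) : J → k)) := by
    funext m
    show (if m = j then (-1 : k) else 1) * (Pi.single l 1 : J → k) m
      = ((if l = j then (-1 : k) else 1) • (Pi.single l (1 : k) : J → k)) m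
    rcases eq_or_ne m l with rfl | hml
    · simp [Pi.single_eq_same]
    · simp [Pi.single_eq_of_ne hml]
  show CliffordAlgebra.ι _ ((flipLM j : (J → k) →ₗ[k] (J → k)) ((Pi.single l 1 : J → k))) = _
  rw [harg, map_smul]

end WSS
end Words

noncomputable section MainPart
open CliffordAlgebra

variable {k : Type*} [Field k] {n : ℕ}

lemma lmul_app (a b : CliffordAlgebra (QF (q : Fin n → k))) :
    Algebra.lmul k (CliffordAlgebra (QF q)) a b = a * b := rfl

lemma eB_eq (q : Fin n → k) (z : Fin n → ZMod 2) :
    eB q z = Wd (QF q) z (List.finRange n) := rfl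

/-- the listing of `Fin n ⊕ Fin n` -/
def ell2 (n : ℕ) : List (Fin n ⊕ Fin n) :=
  ((List.finRange n).map Sum.inl) ++ ((List.finRange n).map Sum.inr)

lemma ell2_nodup : (ell2 n).Nodup := by
  refine List.Nodup.append ?_ ?_ ?_
  · exact (List.nodup_finRange n).map Sum.inl_injective
  · exact (List.nodup_finRange n).map Sum.inr_injective
  · intro a ha hb
    obtain ⟨x, -, rfl⟩ := List.mem_map.mp ha
    obtain ⟨y, -, h⟩ := List.mem_map.mp hb
    simp at h

lemma ell2_mem (j : Fin n ⊕ Fin n) : j ∈ ell2 n := by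
  rcases j with a | a
  · exact List.mem_append_left _ (List.mem_map.mpr ⟨a, List.mem_finRange a, rfl⟩)
  · exact List.mem_append_right _ (List.mem_map.mpr ⟨a, List.mem_finRange a, rfl⟩)

lemma eB2_eq (q : Fin n → k) (x y : Fin n → ZMod 2) :
    eB2 q x y = Wd (QF2 q) (Sum.elim x y) (ell2 n) := by
  rw [ell2, Wd_append, Wd, Wd, List.map_map, List.map_map]
  rfl

lemma QF2_split (q : Fin n → k) (v : (Fin n ⊕ Fin n) → k) :
    QF2 q v = QF q (fun j => v (Sum.inl j)) + QF q (fun j => v (Sum.inr j)) := by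
  show QuadraticMap.weightedSumSquares k (Sum.elim q q) v = _
  show _ = QuadraticMap.weightedSumSquares k q (fun j => v (Sum.inl j))
      + QuadraticMap.weightedSumSquares k q (fun j => v (Sum.inr j))
  rw [QuadraticMap.weightedSumSquares_apply, Fintype.sum_sum_type,
    QuadraticMap.weightedSumSquares_apply, QuadraticMap.weightedSumSquares_apply]
  rfl

/-- the defining linear map of the lift -/
def Fmap (q : Fin n → k) (i : k) :
    ((Fin n ⊕ Fin n) → k) →ₗ[k] Module.End k (CliffordAlgebra (QF q)) where
  toFun v := Algebra.lmul k _ (ι (QF q) (fun j => v (Sum.inl j)))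
    + i • ((LinearMap.mulRight k (ι (QF q) (fun j => v (Sum.inr j)))).comp
        (involute (Q := QF q)).toLinearMap)
  map_add' u v := by
    apply LinearMap.ext; intro c
    have h1 : (fun j => (u + v) (Sum.inl j)) = (fun j => u (Sum.inl j)) + fun j => v (Sum.inl j) := rfl
    have h2 : (fun j => (u + v) (Sum.inr j)) = (fun j => u (Sum.inr j)) + fun j => v (Sum.inr j) := rfl
    simp only [h1, h2, map_add, LinearMap.add_apply, LinearMap.smul_apply, LinearMap.comp_apply,
      LinearMap.mulRight_apply, AlgHom.toLinearMap_apply, lmul_app, add_mul, mul_add, smul_add]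
    abel
  map_smul' r v := by
    apply LinearMap.ext; intro c
    have h1 : (fun j => (r • v) (Sum.inl j)) = r • fun j => v (Sum.inl j) := rfl
    have h2 : (fun j => (r • v) (Sum.inr j)) = r • fun j => v (Sum.inr j) := rfl
    simp only [h1, h2, map_smul, RingHom.id_apply, LinearMap.add_apply, LinearMap.smul_apply,
      LinearMap.comp_apply, LinearMap.mulRight_apply, AlgHom.toLinearMap_apply, lmul_app,
      smul_mul_assoc, mul_smul_comm, smul_add, smul_smul]
    rw [mul_comm]

lemma Fmap_apply (q : Fin n → k) (i : k) (v : (Fin n ⊕ Fin n) → k) :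
    Fmap q i v = Algebra.lmul k _ (ι (QF q) (fun j => v (Sum.inl j)))
      + i • ((LinearMap.mulRight k (ι (QF q) (fun j => v (Sum.inr j)))).comp
          (involute (Q := QF q)).toLinearMap) := rfl

lemma Fmap_sq (q : Fin n → k) (i : k) (hi : i * i = -1) (v : (Fin n ⊕ Fin n) → k) :
    Fmap q i v * Fmap q i v = algebraMap k (Module.End k (CliffordAlgebra (QF q))) (QF2 q v) := by
  apply LinearMap.ext; intro c
  set a := ι (QF q) (fun j => v (Sum.inl j)) with ha
  set b := ι (QF q) (fun j => v (Sum.inr j)) with hb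
  have hainv : involute a = -a := involute_ι _
  have hbinv : involute b = -b := involute_ι _
  rw [Module.End.mul_apply]
  show (Fmap q i v) (a * c + i • (involute c * b)) = _
  show a * (a * c + i • (involute c * b)) + i • (involute (a * c + i • (involute c * b)) * b) = _
  rw [map_add, map_mul, map_smul, map_mul, hainv, involute_involute, hbinv]
  rw [Module.algebraMap_end_apply, QF2_split]
  rw [mul_add, ← mul_assoc, CliffordAlgebra.ι_sq_scalar, add_mul, smul_mul_assoc,
    smul_add, smul_smul, hi, mul_smul_comm]
  have hc1 : i • (a * (involute c * b)) + i • (-a * involute c * b) = 0 := by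
    rw [neg_mul, neg_mul, mul_assoc, smul_neg, add_neg_cancel]
  have hc2 : (-1 : k) • (c * -b * b) = (QF q fun j => v (Sum.inr j)) • c := by
    rw [neg_one_smul, mul_assoc, neg_mul, mul_neg, neg_neg, CliffordAlgebra.ι_sq_scalar,
      ← Algebra.commutes, ← Algebra.smul_def]
  rw [← Algebra.smul_def, add_assoc, ← add_assoc (i • (a * (involute c * b))), hc1, zero_add, hc2,
    ← add_smul]

/-- the lifted algebra morphism -/
def Phi0 (q : Fin n → k) (i : k) (hi : i * i = -1) :
    CliffordAlgebra (QF2 q) →ₐ[k] Module.End k (CliffordAlgebra (QF q)) :=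
  CliffordAlgebra.lift (QF2 q) ⟨Fmap q i, Fmap_sq q i hi⟩

lemma Phi0_inl (q : Fin n → k) (i : k) (hi : i * i = -1) (j : Fin n) :
    Phi0 q i hi (Gg (QF2 q) (Sum.inl j))
      = Algebra.lmul k (CliffordAlgebra (QF q)) (Gg (QF q) j) := by
  rw [Phi0, Gg, CliffordAlgebra.lift_ι_apply]
  have h1 : (fun l => (Pi.single (Sum.inl j) (1 : k) : (Fin n ⊕ Fin n) → k) (Sum.inl l))
      = Pi.single j 1 := by
    funext l
    rw [Pi.single_apply, Pi.single_apply]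
    simp [Sum.inl.injEq]
  have h2 : (fun l => (Pi.single (Sum.inl j) (1 : k) : (Fin n ⊕ Fin n) → k) (Sum.inr l))
      = (0 : Fin n → k) := by
    funext l
    rw [Pi.single_apply, if_neg (by simp)]
    rfl
  rw [Fmap_apply, h1, h2, map_zero]
  have : (LinearMap.mulRight k (0 : CliffordAlgebra (QF q))).comp
      (involute (Q := QF q)).toLinearMap = 0 := by
    apply LinearMap.ext; intro c
    simp
  rw [this, smul_zero, add_zero, Gg]

lemma Phi0_inr (q : Fin n → k) (i : k) (hi : i * i = -1) (j : Fin n) :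
    Phi0 q i hi (Gg (QF2 q) (Sum.inr j))
      = i • ((LinearMap.mulRight k (Gg (QF q) j)).comp (involute (Q := QF q)).toLinearMap) := by
  rw [Phi0, Gg, CliffordAlgebra.lift_ι_apply]
  have h1 : (fun l => (Pi.single (Sum.inr j) (1 : k) : (Fin n ⊕ Fin n) → k) (Sum.inl l))
      = (0 : Fin n → k) := by
    funext l
    rw [Pi.single_apply, if_neg (by simp)]
    rfl
  have h2 : (fun l => (Pi.single (Sum.inr j) (1 : k) : (Fin n ⊕ Fin n) → k) (Sum.inr l))
      = Pi.single j 1 := by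
    funext l
    rw [Pi.single_apply, Pi.single_apply]
    simp [Sum.inr.injEq]
  rw [Fmap_apply, h1, h2, map_zero, map_zero, zero_add, Gg]


lemma neg_one_pow_mod {k : Type*} [Field k] (a b : ℕ) (h : a % 2 = b % 2) :
    (-1 : k) ^ a = (-1 : k) ^ b := by
  conv_lhs => rw [← Nat.div_add_mod a 2, pow_add, pow_mul, neg_one_sq, one_pow, one_mul]
  conv_rhs => rw [← Nat.div_add_mod b 2, pow_add, pow_mul, neg_one_sq, one_pow, one_mul]
  rw [h]

variable (q : Fin n → k) (i : k)

lemma Rpart (y z : Fin n → ZMod 2) :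
    ∀ L : List (Fin n), L.Nodup →
    ((L.map fun j => (i • ((LinearMap.mulRight k (Gg (QF q) j)).comp
        (involute (Q := QF q)).toLinearMap)) ^ (y j).val).prod)
        (Wd (QF q) z (List.finRange n))
      = ((i ^ ((L.map fun a => (y a).val).sum))
          * ((-1 : k) ^ ((L.map fun a => (y a).val * (z a).val).sum)))
          • (Wd (QF q) y L * Wd (QF q) z (List.finRange n)) := by
  have hanti : ∀ j l, j ≠ l → Gg (QF q) j * Gg (QF q) l = -(Gg (QF q) l * Gg (QF q) j) :=
    fun j l h => wss_anti q j l h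
  intro L
  induction L with
  | nil => simp
  | cons a L ih =>
    intro hN
    have haL : a ∉ L := (List.nodup_cons.mp hN).1
    have hLN : L.Nodup := (List.nodup_cons.mp hN).2
    rw [List.map_cons, List.prod_cons, Module.End.mul_apply, ih hLN]
    set W := Wd (QF q) y L with hW
    set E := Wd (QF q) z (List.finRange n) with hE
    set σ := (L.map fun a => (y a).val).sum with hσ
    set τ := (L.map fun a => (y a).val * (z a).val).sum with hτ
    set ρz := ((List.finRange n).map fun b => (z b).val).sum with hρz
    set e := ((List.finRange n).map fun b => if b = a then 0 else (z b).val).sum with he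
    rcases zmod2_val_cases (y a) with h0 | h0
    · rw [h0, pow_zero, Module.End.one_apply, List.map_cons, List.sum_cons, h0,
        List.map_cons, List.sum_cons, h0, Nat.zero_mul, zero_add, zero_add, Wd_cons, h0,
        pow_zero, one_mul]
    · rw [h0, pow_one, map_smul, LinearMap.smul_apply, LinearMap.comp_apply,
        AlgHom.toLinearMap_apply, LinearMap.mulRight_apply, map_mul, involute_Wd, involute_Wd,
        ← hW, ← hE, ← hσ, ← hρz]
      have hsplit : e + (z a).val = ρz :=
        list_sum_split (fun b => (z b).val) a (List.finRange n)
          (List.nodup_finRange n) (List.mem_finRange a)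
      have hcomm1 : E * Gg (QF q) a = ((-1 : k) ^ e) • (Gg (QF q) a * E) := by
        rw [hE, Wd_mul_g hanti z (List.finRange n) a, ← he]
      have hσ' : (L.map fun b => if b = a then 0 else (y b).val).sum = σ := by
        rw [hσ]
        congr 1
        refine List.map_congr_left fun b hb => ?_
        rw [if_neg (by rintro rfl; exact haL hb)]
      have hcomm2 : W * Gg (QF q) a = ((-1 : k) ^ σ) • (Gg (QF q) a * W) := by
        rw [hW, Wd_mul_g hanti y L a, hσ']
      rw [smul_mul_assoc, mul_smul_comm, smul_mul_assoc, smul_smul, smul_smul,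
        smul_mul_assoc, smul_smul, mul_assoc W E, hcomm1, mul_smul_comm, smul_smul,
        ← mul_assoc W, hcomm2, smul_mul_assoc, smul_smul]
      rw [List.map_cons, List.sum_cons, h0, List.map_cons, List.sum_cons, h0, Nat.one_mul,
        Wd_cons, h0, pow_one, ← hW, ← hσ, ← hτ]
      congr 1
      rw [← hsplit, pow_add (-1 : k) e ((z a).val), pow_add i 1 σ, pow_one]
      ring_nf
      have h2 : ∀ m : ℕ, (-1 : k) ^ (m * 2) = 1 := fun m => by
        rw [pow_mul', neg_one_sq, one_pow]
      simp [h2]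

lemma lmul_Wd (x : Fin n → ZMod 2) :
    Algebra.lmul k (CliffordAlgebra (QF q)) (Wd (QF q) x (List.finRange n))
      = ((List.finRange n).map fun j =>
          (Algebra.lmul k (CliffordAlgebra (QF q)) (Gg (QF q) j)) ^ (x j).val).prod := by
  rw [Wd, map_list_prod, List.map_map]
  congr 1
  refine List.map_congr_left fun j _ => ?_
  show Algebra.lmul k _ (Gg (QF q) j ^ (x j).val) = _
  rw [map_pow]

lemma Phi0_formula (hi : i * i = -1) (x y z : Fin n → ZMod 2) :
    Phi0 q i hi (eB2 q x y) (eB q z)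
      = (i ^ rho y * (-1 : k) ^ dotp y z) • (eB q x * eB q y * eB q z) := by
  rw [eB2_eq, ell2, Wd_append, map_mul]
  have hLfac : Phi0 q i hi (Wd (QF2 q) (Sum.elim x y) ((List.finRange n).map Sum.inl))
      = Algebra.lmul k (CliffordAlgebra (QF q)) (Wd (QF q) x (List.finRange n)) := by
    rw [Wd, List.map_map, map_list_prod, List.map_map, lmul_Wd]
    congr 1
    refine List.map_congr_left fun j _ => ?_
    show Phi0 q i hi (Gg (QF2 q) (Sum.inl j) ^ ((Sum.elim x y) (Sum.inl j)).val) = _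
    rw [map_pow, Phi0_inl]
    rfl
  have hRfac : Phi0 q i hi (Wd (QF2 q) (Sum.elim x y) ((List.finRange n).map Sum.inr))
      = ((List.finRange n).map fun j => (i • ((LinearMap.mulRight k (Gg (QF q) j)).comp
          (involute (Q := QF q)).toLinearMap)) ^ (y j).val).prod := by
    rw [Wd, List.map_map, map_list_prod, List.map_map]
    congr 1
    refine List.map_congr_left fun j _ => ?_
    show Phi0 q i hi (Gg (QF2 q) (Sum.inr j) ^ ((Sum.elim x y) (Sum.inr j)).val) = _
    rw [map_pow, Phi0_inr]
    rfl
  rw [hLfac, hRfac, Module.End.mul_apply, eB_eq q z,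
    Rpart q i y z (List.finRange n) (List.nodup_finRange n), map_smul, lmul_app]
  rw [rho, dotp, Fin.sum_univ_def, Fin.sum_univ_def, eB_eq q x, eB_eq q y, mul_assoc]

lemma char_sum (y y0 : Fin n → ZMod 2) :
    ∑ z : Fin n → ZMod 2, ((-1 : k) ^ dotp y z * (-1 : k) ^ dotp y0 z)
      = if y = y0 then ((2 : k) ^ n) else 0 := by
  have hterm : ∀ z : Fin n → ZMod 2, ((-1 : k) ^ dotp y z * (-1 : k) ^ dotp y0 z)
      = ∏ j, ((-1 : k) ^ ((y j).val * (z j).val) * (-1 : k) ^ ((y0 j).val * (z j).val)) := by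
    intro z
    rw [dotp, dotp, ← Finset.prod_pow_eq_pow_sum, ← Finset.prod_pow_eq_pow_sum,
      ← Finset.prod_mul_distrib]
  rw [Finset.sum_congr rfl fun z _ => hterm z]
  rw [show (Finset.univ : Finset (Fin n → ZMod 2)) = Fintype.piFinset fun _ => Finset.univ from
    (Fintype.piFinset_univ).symm,
    ← Finset.prod_univ_sum (fun _ : Fin n => (Finset.univ : Finset (ZMod 2)))
      (fun j t => (-1 : k) ^ ((y j).val * t.val) * (-1 : k) ^ ((y0 j).val * t.val))]
  have hfac : ∀ j : Fin n,
      (∑ t : ZMod 2, ((-1 : k) ^ ((y j).val * t.val) * (-1 : k) ^ ((y0 j).val * t.val)))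
        = if y j = y0 j then 2 else 0 := by
    intro j
    have huniv : (Finset.univ : Finset (ZMod 2)) = {0, 1} := by decide
    rw [huniv, Finset.sum_insert (by decide), Finset.sum_singleton]
    have hv0 : (0 : ZMod 2).val = 0 := rfl
    have hv1 : (1 : ZMod 2).val = 1 := rfl
    simp only [hv0, hv1, Nat.mul_zero, Nat.mul_one, pow_zero, one_mul]
    rw [neg_one_pow_vals]
    rcases eq_or_ne (y j) (y0 j) with h | h
    · rw [if_pos h, if_pos h]; norm_num
    · rw [if_neg h, if_neg h]; norm_num
  rw [Finset.prod_congr rfl fun j _ => hfac j]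
  rcases eq_or_ne y y0 with rfl | hne
  · rw [if_pos rfl]
    have : ∀ j : Fin n, (if y j = y j then (2 : k) else 0) = 2 := fun j => if_pos rfl
    rw [Finset.prod_congr rfl fun j _ => this j, Finset.prod_const, Finset.card_univ,
      Fintype.card_fin]
  · rw [if_neg hne]
    obtain ⟨j, hj⟩ : ∃ j, y j ≠ y0 j := by
      by_contra h; push_neg at h; exact hne (funext h)
    exact Finset.prod_eq_zero (Finset.mem_univ j) (if_neg hj)

end MainPart

/-- if `√(-1) ∈ k` then there is an algebra isomorphism
`C(V⊕V, q⊕q) ≅ End_k(C(V,q))`, under which `e_x ⊗ e_y` acts on `e_z` by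
`(e_x ⊗ e_y)·e_z = i^{ρ(y)} (-1)^{y·z} e_x e_y e_z`; in particular the action is
faithful and irreducible, realizing `C(V,q)` as the spinor representation. -/
theorem clifford_double_iso_end {k : Type*} [Field k] (hk : (2 : k) ≠ 0)
    (i : k) (hi : i * i = -1)
    {n : ℕ} (q : Fin n → k) (hq : ∀ j, q j ≠ 0) :
    ∃ Φ : CliffordAlgebra (QF2 q) ≃ₐ[k] Module.End k (CliffordAlgebra (QF q)),
      (∀ x y z : Fin n → ZMod 2,
        Φ (eB2 q x y) (eB q z) =
          (i ^ rho y * (-1 : k) ^ dotp y z) • (eB q x * eB q y * eB q z)) ∧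
      (∀ U : Submodule k (CliffordAlgebra (QF q)),
        (∀ (a : CliffordAlgebra (QF2 q)), ∀ c ∈ U, Φ a c ∈ U) → U = ⊥ ∨ U = ⊤) := by
  letI : Invertible (2 : k) := invertibleOfNonzero hk
  have hone1 : (1 : CliffordAlgebra (QF q)) ≠ 0 := one_ne_zero
  have hsq1 : ∀ j, Gg (QF q) j * Gg (QF q) j = algebraMap k _ (q j) := fun j => wss_sq q j
  have hanti1 : ∀ j l, j ≠ l → Gg (QF q) j * Gg (QF q) l = -(Gg (QF q) l * Gg (QF q) j) :=
    fun j l h => wss_anti q j l h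
  have hsq2 : ∀ j, Gg (QF2 q) j * Gg (QF2 q) j = algebraMap k _ (Sum.elim q q j) :=
    fun j => wss_sq (Sum.elim q q) j
  have hanti2 : ∀ j l, j ≠ l → Gg (QF2 q) j * Gg (QF2 q) l
      = -(Gg (QF2 q) l * Gg (QF2 q) j) := fun j l h => wss_anti (Sum.elim q q) j l h
  have hq2 : ∀ j, Sum.elim q q j ≠ 0 := by intro j; rcases j with a | a <;> exact hq a
  have hnd1 : (List.finRange n).Nodup := List.nodup_finRange n
  have hmem1 : ∀ j : Fin n, j ∈ List.finRange n := fun j => List.mem_finRange j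
  have hone2 : (1 : CliffordAlgebra (QF2 q)) ≠ 0 := one_ne_zero
  have hli1 : LinearIndependent k (fun z : Fin n → ZMod 2 => Wd (QF q) z (List.finRange n)) :=
    Wd_linearIndependent hsq1 hanti1 hq hnd1 hmem1 hone1 hk
      (fun j => flipA q j) (fun j l => flipA_Gg q j l)
  have hsp1 := Wd_span hsq1 hanti1 hq hnd1 hmem1
  have hli2 : LinearIndependent k
      (fun z : (Fin n ⊕ Fin n) → ZMod 2 => Wd (QF2 q) z (ell2 n)) :=
    Wd_linearIndependent hsq2 hanti2 hq2 ell2_nodup ell2_mem hone2 hk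
      (fun j => flipA (Sum.elim q q) j) (fun j l => flipA_Gg (Sum.elim q q) j l)
  have hsp2 := Wd_span hsq2 hanti2 hq2 ell2_nodup ell2_mem
  let b1 : Module.Basis (Fin n → ZMod 2) k (CliffordAlgebra (QF q)) := Module.Basis.mk hli1 hsp1
  let b2 : Module.Basis ((Fin n ⊕ Fin n) → ZMod 2) k (CliffordAlgebra (QF2 q)) := Module.Basis.mk hli2 hsp2
  haveI : Module.Finite k (CliffordAlgebra (QF q)) := Module.Finite.of_basis b1
  haveI : Module.Finite k (CliffordAlgebra (QF2 q)) := Module.Finite.of_basis b2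
  haveI : Module.Free k (CliffordAlgebra (QF q)) := Module.Free.of_basis b1
  have hfr1 : Module.finrank k (CliffordAlgebra (QF q)) = 2 ^ n := by
    rw [Module.finrank_eq_card_basis b1, Fintype.card_fun, ZMod.card, Fintype.card_fin]
  have hfr2 : Module.finrank k (CliffordAlgebra (QF2 q)) = 2 ^ (n + n) := by
    rw [Module.finrank_eq_card_basis b2, Fintype.card_fun, ZMod.card, Fintype.card_sum,
      Fintype.card_fin]
  have hfrE : Module.finrank k (Module.End k (CliffordAlgebra (QF q))) = 2 ^ n * 2 ^ n := by
    rw [Module.finrank_linearMap, hfr1]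
  -- products of basis words
  have hEmul : ∀ x' y' : Fin n → ZMod 2, ∃ c : k, c ≠ 0 ∧
      eB q x' * eB q y' = c • eB q (x' + y') :=
    fun x' y' => Wd_mul_Wd hsq1 hanti1 hq hnd1 hmem1 x' y'
  choose d1 hd10 hd1mul using hEmul
  have hi0 : i ≠ 0 := by
    intro h; rw [h, zero_mul] at hi; exact absurd hi.symm (by norm_num)
  -- coefficient extraction
  have hcoeff : ∀ (h : ((Fin n → ZMod 2) × (Fin n → ZMod 2)) → k)
      (m : ((Fin n → ZMod 2) × (Fin n → ZMod 2)) → (Fin n → ZMod 2)),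
      (∑ p, h p • eB q (m p)) = 0 → ∀ u, (∑ p, if m p = u then h p else 0) = 0 := by
    intro h m hsum u
    have hre : (∑ p, h p • eB q (m p))
        = ∑ u' : Fin n → ZMod 2, (∑ p, if m p = u' then h p else 0) • eB q u' := by
      have h1 : ∀ u' : Fin n → ZMod 2,
          (∑ p, if m p = u' then h p else 0) • eB q u'
            = ∑ p, (if m p = u' then h p else 0) • eB q u' := by
        intro u'; rw [Finset.sum_smul]
      rw [Finset.sum_congr rfl fun u' _ => h1 u', Finset.sum_comm]
      refine Finset.sum_congr rfl fun p _ => ?_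
      rw [Finset.sum_eq_single (m p)]
      · rw [if_pos rfl]
      · intro u' _ hu'; rw [if_neg (fun hh => hu' hh.symm), zero_smul]
      · intro hmem; exact absurd (Finset.mem_univ _) hmem
    rw [hre] at hsum
    exact (Fintype.linearIndependent_iff.mp hli1)
      (fun u' => ∑ p, if m p = u' then h p else 0) hsum u
  -- linear independence of the images of the eB2
  have hTli : LinearIndependent k
      (fun p : (Fin n → ZMod 2) × (Fin n → ZMod 2) => Phi0 q i hi (eB2 q p.1 p.2)) := by
    rw [Fintype.linearIndependent_iff]
    intro g hg p0
    set s0 := p0.1 + p0.2 with hs0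
    set ψ : ((Fin n → ZMod 2) × (Fin n → ZMod 2)) → k := fun p =>
      if p.1 + p.2 = s0 then g p * (i ^ rho p.2 * d1 p.1 p.2) else 0 with hψ
    have key : ∀ z : Fin n → ZMod 2, (∑ p, ψ p * (-1 : k) ^ dotp p.2 z) = 0 := by
      intro z
      have happ := congrArg
        (fun T : Module.End k (CliffordAlgebra (QF q)) => T (eB q z)) hg
      simp only [LinearMap.sum_apply, LinearMap.smul_apply, LinearMap.zero_apply] at happ
      have hsummand : ∀ p : (Fin n → ZMod 2) × (Fin n → ZMod 2),
          g p • (Phi0 q i hi (eB2 q p.1 p.2)) (eB q z)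
            = (g p * ((i ^ rho p.2 * (-1 : k) ^ dotp p.2 z)
                * (d1 p.1 p.2 * d1 (p.1 + p.2) z))) • eB q ((p.1 + p.2) + z) := by
        intro p
        rw [Phi0_formula q i hi p.1 p.2 z, hd1mul p.1 p.2, smul_mul_assoc, hd1mul (p.1 + p.2) z,
          smul_smul, smul_smul, smul_smul]
        congr 1
        ring
      rw [Finset.sum_congr rfl fun p _ => hsummand p] at happ
      have h0 := hcoeff _ _ happ (s0 + z)
      have hcond : ∀ p : (Fin n → ZMod 2) × (Fin n → ZMod 2),
          ((p.1 + p.2) + z = s0 + z) ↔ (p.1 + p.2 = s0) :=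
        fun p => ⟨fun h => add_right_cancel h, fun h => by rw [h]⟩
      have hterm : ∀ p : (Fin n → ZMod 2) × (Fin n → ZMod 2),
          (if (p.1 + p.2) + z = s0 + z then
              g p * ((i ^ rho p.2 * (-1 : k) ^ dotp p.2 z)
                * (d1 p.1 p.2 * d1 (p.1 + p.2) z)) else 0)
            = (ψ p * (-1 : k) ^ dotp p.2 z) * d1 s0 z := by
        intro p
        by_cases hc : p.1 + p.2 = s0
        · rw [if_pos ((hcond p).mpr hc), hψ]
          simp only
          rw [if_pos hc, hc]
          ring
        · rw [if_neg (fun h => hc ((hcond p).mp h)), hψ]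
          simp only
          rw [if_neg hc, zero_mul, zero_mul]
      rw [Finset.sum_congr rfl fun p _ => hterm p, ← Finset.sum_mul] at h0
      rcases mul_eq_zero.mp h0 with h | h
      · exact h
      · exact absurd h (hd10 s0 z)
    have hzero : (∑ z : Fin n → ZMod 2,
        (∑ p, ψ p * (-1 : k) ^ dotp p.2 z) * (-1 : k) ^ dotp p0.2 z) = 0 :=
      Finset.sum_eq_zero fun z _ => by rw [key z, zero_mul]
    have hswap : (∑ z : Fin n → ZMod 2,
        (∑ p, ψ p * (-1 : k) ^ dotp p.2 z) * (-1 : k) ^ dotp p0.2 z)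
          = ∑ p, ψ p * (∑ z : Fin n → ZMod 2,
              ((-1 : k) ^ dotp p.2 z * (-1 : k) ^ dotp p0.2 z)) := by
      have h1 : ∀ z : Fin n → ZMod 2,
          (∑ p, ψ p * (-1 : k) ^ dotp p.2 z) * (-1 : k) ^ dotp p0.2 z
            = ∑ p, ψ p * ((-1 : k) ^ dotp p.2 z * (-1 : k) ^ dotp p0.2 z) := by
        intro z
        rw [Finset.sum_mul]
        exact Finset.sum_congr rfl fun p _ => by ring
      rw [Finset.sum_congr rfl fun z _ => h1 z, Finset.sum_comm]
      exact Finset.sum_congr rfl fun p _ => by rw [Finset.mul_sum]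
    rw [hswap] at hzero
    have hchar : ∀ p : (Fin n → ZMod 2) × (Fin n → ZMod 2),
        ψ p * (∑ z : Fin n → ZMod 2, ((-1 : k) ^ dotp p.2 z * (-1 : k) ^ dotp p0.2 z))
          = ψ p * (if p.2 = p0.2 then ((2 : k) ^ n) else 0) :=
      fun p => by rw [char_sum]
    rw [Finset.sum_congr rfl fun p _ => hchar p, Finset.sum_eq_single p0] at hzero
    · rw [if_pos rfl, hψ] at hzero
      simp only at hzero
      rw [if_pos hs0.symm] at hzero
      rcases mul_eq_zero.mp hzero with h | h
      · rcases mul_eq_zero.mp h with h' | h'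
        · exact h'
        · rcases mul_eq_zero.mp h' with h'' | h''
          · exact absurd h'' (pow_ne_zero _ hi0)
          · exact absurd h'' (hd10 p0.1 p0.2)
      · exact absurd h (pow_ne_zero _ hk)
    · intro p _ hp
      rcases eq_or_ne p.2 p0.2 with h2 | h2
      · have h1 : p.1 ≠ p0.1 := by
          intro h1
          exact hp (Prod.ext h1 h2)
        have hψ0 : ψ p = 0 := by
          rw [hψ]
          simp only
          rw [if_neg]
          intro hc
          rw [h2, hs0] at hc
          exact h1 (add_right_cancel hc)
        rw [hψ0, zero_mul]
      · rw [if_neg h2, mul_zero]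
    · intro hmem; exact absurd (Finset.mem_univ _) hmem
  -- surjectivity
  have hcard : Fintype.card ((Fin n → ZMod 2) × (Fin n → ZMod 2))
      = Module.finrank k (Module.End k (CliffordAlgebra (QF q))) := by
    rw [Fintype.card_prod, Fintype.card_fun, ZMod.card, Fintype.card_fin, hfrE]
  have hTsp := hTli.span_eq_top_of_card_eq_finrank hcard
  have hrange : LinearMap.range (Phi0 q i hi).toLinearMap = ⊤ := by
    rw [← top_le_iff, ← hTsp, Submodule.span_le]
    rintro _ ⟨p, rfl⟩
    exact ⟨eB2 q p.1 p.2, rfl⟩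
  have hsurj : Function.Surjective ⇑(Phi0 q i hi) := by
    intro T
    have hT : T ∈ LinearMap.range (Phi0 q i hi).toLinearMap := hrange ▸ Submodule.mem_top
    obtain ⟨x, hx⟩ := hT
    exact ⟨x, hx⟩
  have hinj : Function.Injective ⇑(Phi0 q i hi) := by
    have hrk := LinearMap.finrank_range_add_finrank_ker (Phi0 q i hi).toLinearMap
    rw [hrange, finrank_top, hfrE, hfr2] at hrk
    have hker0 : Module.finrank k (LinearMap.ker (Phi0 q i hi).toLinearMap) = 0 := by
      rw [pow_add] at hrk
      omega
    have hker : LinearMap.ker (Phi0 q i hi).toLinearMap = ⊥ :=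
      Submodule.finrank_eq_zero.mp hker0
    exact LinearMap.ker_eq_bot.mp hker
  refine ⟨AlgEquiv.ofBijective (Phi0 q i hi) ⟨hinj, hsurj⟩, ?_, ?_⟩
  · intro x y z
    exact Phi0_formula q i hi x y z
  · intro U hU
    rcases eq_or_ne U ⊥ with h | h
    · left; exact h
    right
    obtain ⟨c0, hc0U, hc00⟩ := (Submodule.ne_bot_iff U).mp h
    rw [eq_top_iff]
    intro d _
    obtain ⟨φ, hφ⟩ : ∃ φ : Module.Dual k (CliffordAlgebra (QF q)), φ c0 ≠ 0 := by
      by_contra hcon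
      push_neg at hcon
      exact hc00 ((Module.forall_dual_apply_eq_zero_iff k c0).mp hcon)
    have hmem := hU ((AlgEquiv.ofBijective (Phi0 q i hi) ⟨hinj, hsurj⟩).symm
      ((φ c0)⁻¹ • (φ.smulRight d))) c0 hc0U
    rw [AlgEquiv.apply_symm_apply] at hmem
    have hval : ((φ c0)⁻¹ • (φ.smulRight d)) c0 = d := by
      rw [LinearMap.smul_apply, LinearMap.smulRight_apply, smul_smul, inv_mul_cancel₀ hφ,
        one_smul]
    rwa [hval] at hmem
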